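/- Let G and H be finitely generated subgroups of a free group F. Then the intersection of the sub-group-rings ℤ[G] and ℤ[H] inside ℤ[F] equals ℤ[G ∩ H], and in particular G ∩ H is finitely generated (Howson property), so ℤ[G] ∩ ℤ[H] is a group ring of a finitely generated free group. -/

import Mathlib

namespace HowsonAux

open FreeGroup List

variable {α : Type*} [DecidableEq α]

/-- The no-cancellation relation between adjacent letters. -/
def NC (a b : α × Bool) : Prop := ¬(a.1 = b.1 ∧ a.2 = !b.2)

theorem chain'_reduce (L : List (α × Bool)) : List.Chain' NC (reduce L) := by
  induction L with
  | nil => simp [List.Chain']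
  | cons x t ih =>
    rw [reduce.cons]
    rcases h : reduce t with _ | ⟨y, tl⟩
    · simp [List.Chain']
    · rw [h] at ih
      by_cases hc : x.1 = y.1 ∧ x.2 = !y.2
      · simpa [hc, List.Chain'] using ih.tail
      · simpa [hc, List.Chain'] using List.IsChain.cons_cons (R := NC) hc ih

theorem reduce_eq_self_of_chain' {L : List (α × Bool)} (h : List.Chain' NC L) :
    reduce L = L := by
  induction L with
  | nil => rfl
  | cons x t ih =>
    rw [reduce.cons, ih h.tail]
    rcases t with _ | ⟨y, tl⟩
    · rfl
    · have : NC x y := (List.isChain_cons_cons.1 h).1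
      simp only [NC] at this
      simp [this]

theorem chain'_of_reduce_eq_self {L : List (α × Bool)} (h : reduce L = L) :
    List.Chain' NC L := h ▸ chain'_reduce L

/-- Key cancellation lemma: the reduction of a concatenation of two reduced words
is obtained by cancelling a suffix of the first against a prefix of the second. -/
theorem reduce_append (u v : List (α × Bool)) (hu : reduce u = u) (hv : reduce v = v) :
    ∃ n, n ≤ u.length ∧ n ≤ v.length ∧
      reduce (u ++ v) = u.take (u.length - n) ++ v.drop n ∧
      u.drop (u.length - n) = invRev (v.take n) := by
  induction u using List.reverseRecOn generalizing v with
  | nil =>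
    refine ⟨0, by simp, by simp, by simpa using hv, by simp [invRev]⟩
  | append_singleton u₁ x ih =>
    rcases v with _ | ⟨y, v₁⟩
    · refine ⟨0, by simp, by simp, ?_, by simp [invRev]⟩
      rw [Nat.sub_zero, List.take_length, List.drop_zero]
      simpa using hu
    · have hu₁ : reduce u₁ = u₁ :=
        reduce_eq_self_of_chain' ((chain'_of_reduce_eq_self hu).prefix ⟨[x], rfl⟩)
      by_cases hc : x.1 = y.1 ∧ x.2 = !y.2
      · -- cancellation at the junction
        have hv₁ : reduce v₁ = v₁ :=
          reduce_eq_self_of_chain' ((chain'_of_reduce_eq_self hv).tail)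
        obtain ⟨xa, xb⟩ := x
        obtain ⟨ya, yb⟩ := y
        obtain ⟨rfl, rfl⟩ : xa = ya ∧ xb = !yb := hc
        have hstep : FreeGroup.Red.Step ((u₁ ++ [(xa, !yb)]) ++ (xa, yb) :: v₁) (u₁ ++ v₁) := by
          have := @FreeGroup.Red.Step.not α u₁ v₁ xa (!yb)
          simpa using this
        have hred : reduce ((u₁ ++ [(xa, !yb)]) ++ (xa, yb) :: v₁) = reduce (u₁ ++ v₁) :=
          reduce.Step.eq hstep
        obtain ⟨n, hn1, hn2, hn3, hn4⟩ := ih v₁ hu₁ hv₁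
        refine ⟨n + 1, by simpa using Nat.succ_le_succ hn1, by simpa using Nat.succ_le_succ hn2,
          ?_, ?_⟩
        · rw [hred, hn3]
          have hlen : (u₁ ++ [(xa, !yb)]).length - (n + 1) = u₁.length - n := by
            simp [Nat.succ_sub_succ]
          rw [hlen, List.take_append_of_le_length (Nat.sub_le _ _)]
          rfl
        · have hlen : (u₁ ++ [(xa, !yb)]).length - (n + 1) = u₁.length - n := by
            simp [Nat.succ_sub_succ]
          rw [hlen, List.drop_append_of_le_length (Nat.sub_le _ _), hn4]
          show _ = invRev ((xa, yb) :: v₁.take n)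
          simp [invRev]
      · -- no cancellation: the concatenation is already reduced
        have hch : List.Chain' NC ((u₁ ++ [x]) ++ y :: v₁) := by
          refine List.isChain_append.2 ⟨chain'_of_reduce_eq_self hu,
            chain'_of_reduce_eq_self hv, ?_⟩
          intro a ha b hb
          simp at ha hb
          subst ha; subst hb
          exact hc
        refine ⟨0, by simp, by simp, ?_, by simp [invRev]⟩
        rw [Nat.sub_zero, List.take_length, List.drop_zero]
        simpa using reduce_eq_self_of_chain' hch


theorem mk_take_mul_mk_drop (L : List (α × Bool)) (n : ℕ) :
    FreeGroup.mk (L.take n) * FreeGroup.mk (L.drop n) = FreeGroup.mk L := by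
  rw [FreeGroup.mul_mk, List.take_append_drop]

theorem toWord_mul (x y : FreeGroup α) :
    (x * y).toWord = reduce (x.toWord ++ y.toWord) := by
  conv_lhs => rw [← FreeGroup.mk_toWord (x := x), ← FreeGroup.mk_toWord (x := y),
    FreeGroup.mul_mk, FreeGroup.toWord_mk]

theorem invRev_take (L : List (α × Bool)) (n : ℕ) :
    (invRev L).take n = invRev (L.drop (L.length - n)) := by
  rw [invRev, List.take_reverse, ← List.map_drop]
  simp [invRev]

/-- Core lemma: any prefix of the reduced word of an element of `closure S` is,
modulo `closure S` (acting on the left), equal to `1` or to a prefix of a generator. -/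
theorem prefix_class (S : Set (FreeGroup α)) {g : FreeGroup α}
    (hg : g ∈ Subgroup.closure S) (n : ℕ) :
    ∃ c : FreeGroup α,
      (c = 1 ∨ ∃ s ∈ S, ∃ m, c = FreeGroup.mk ((toWord s).take m)) ∧
      FreeGroup.mk ((toWord g).take n) * c⁻¹ ∈ Subgroup.closure S := by
  induction hg using Subgroup.closure_induction generalizing n with
  | mem s hs =>
    exact ⟨FreeGroup.mk ((toWord s).take n), Or.inr ⟨s, hs, n, rfl⟩, by
      rw [mul_inv_cancel]; exact one_mem _⟩
  | one =>
    refine ⟨1, Or.inl rfl, ?_⟩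
    simpa [FreeGroup.toWord_one, ← FreeGroup.one_eq_mk] using one_mem _
  | mul x y hx hy ihx ihy =>
    set u := toWord x with hu
    set v := toWord y with hv
    obtain ⟨k, hk1, hk2, hk3, hk4⟩ := reduce_append u v (reduce_toWord x) (reduce_toWord y)
    have htw : (x * y).toWord = u.take (u.length - k) ++ v.drop k := by
      rw [toWord_mul, hk3]
    by_cases hn : n ≤ u.length - k
    · have hpre : ((x * y).toWord).take n = u.take n := by
        rw [htw, List.take_append_of_le_length (by simpa using hn), List.take_take,
          min_eq_left hn]
      rw [hpre]
      exact ihx n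
    · have hlen1 : (u.take (u.length - k)).length = u.length - k := by
        simp [Nat.sub_le]
      have hpre : ((x * y).toWord).take n
          = u.take (u.length - k) ++ (v.drop k).take (n - (u.length - k)) := by
        rw [htw, List.take_append, hlen1,
          List.take_of_length_le (by omega : (u.take (u.length - k)).length ≤ n)]
      have hmk1 : FreeGroup.mk (u.take (u.length - k)) = x * FreeGroup.mk (v.take k) := by
        have hx1 : FreeGroup.mk (u.take (u.length - k)) * FreeGroup.mk (u.drop (u.length - k))
            = x := by rw [mk_take_mul_mk_drop]; exact FreeGroup.mk_toWord
        rw [hk4, ← FreeGroup.inv_mk] at hx1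
        group at hx1 ⊢
        rw [← hx1]
        group
      have hmk : FreeGroup.mk (((x * y).toWord).take n)
          = x * FreeGroup.mk (v.take (k + (n - (u.length - k)))) := by
        rw [hpre, ← FreeGroup.mul_mk, hmk1, List.take_add, ← FreeGroup.mul_mk, mul_assoc]
      obtain ⟨c, hc, hmem⟩ := ihy (k + (n - (u.length - k)))
      refine ⟨c, hc, ?_⟩
      rw [hmk, mul_assoc]
      exact mul_mem hx hmem
  | inv x hx ih =>
    set u := toWord x with hu
    have htake : ((x⁻¹).toWord).take n = invRev (u.drop (u.length - n)) := by
      rw [FreeGroup.toWord_inv, invRev_take]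
    have hmk : FreeGroup.mk (((x⁻¹).toWord).take n)
        = x⁻¹ * FreeGroup.mk (u.take (u.length - n)) := by
      rw [htake, ← FreeGroup.inv_mk]
      have hx1 : FreeGroup.mk (u.take (u.length - n)) * FreeGroup.mk (u.drop (u.length - n))
          = x := by rw [mk_take_mul_mk_drop]; exact FreeGroup.mk_toWord
      rw [← hx1]
      group
    obtain ⟨c, hc, hmem⟩ := ih (u.length - n)
    refine ⟨c, hc, ?_⟩
    rw [hmk, mul_assoc]
    exact mul_mem (inv_mem hx) hmem

/-- The set of canonical prefix classes is finite when `S` is. -/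
theorem classSet_finite {S : Set (FreeGroup α)} (hS : S.Finite) :
    {c : FreeGroup α | c = 1 ∨ ∃ s ∈ S, ∃ m, c = FreeGroup.mk ((toWord s).take m)}.Finite := by
  have hsub : {c : FreeGroup α | c = 1 ∨ ∃ s ∈ S, ∃ m, c = FreeGroup.mk ((toWord s).take m)}
      ⊆ insert 1 (⋃ s ∈ S,
        (fun m => FreeGroup.mk ((toWord s).take m)) '' Set.Iic (toWord s).length) := by
    rintro c (rfl | ⟨s, hs, m, rfl⟩)
    · exact Set.mem_insert _ _
    · refine Set.mem_insert_of_mem _ (Set.mem_biUnion hs ?_)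
      rcases le_or_gt m (toWord s).length with h | h
      · exact ⟨m, h, rfl⟩
      · refine ⟨(toWord s).length, Set.mem_Iic.2 (le_refl _), ?_⟩
        simp [List.take_of_length_le h.le]
  exact Set.Finite.subset
    ((hS.biUnion fun s _ => (Set.finite_Iic _).image _).insert _) hsub

/-- Every letter in the reduced word of an element of `closure S` occurs in a generator. -/
theorem letter_mem (S : Set (FreeGroup α)) {g : FreeGroup α}
    (hg : g ∈ Subgroup.closure S) :
    ∀ p ∈ toWord g, ∃ s ∈ S, ∃ b, (p.1, b) ∈ toWord s := by
  induction hg using Subgroup.closure_induction with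
  | mem s hs => exact fun p hp => ⟨s, hs, p.2, by simpa using hp⟩
  | one => simp [FreeGroup.toWord_one]
  | mul x y hx hy ihx ihy =>
    intro p hp
    have hsub : (x * y).toWord <+ x.toWord ++ y.toWord := FreeGroup.toWord_mul_sublist x y
    rcases List.mem_append.1 (hsub.mem hp) with h | h
    · exact ihx p h
    · exact ihy p h
  | inv x hx ih =>
    intro p hp
    rw [FreeGroup.toWord_inv, invRev] at hp
    rw [List.mem_reverse, List.mem_map] at hp
    obtain ⟨q, hq, rfl⟩ := hp
    exact ih q hq

/-- The set of elements of `closure S` of bounded word length is finite, for finite `S`. -/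
theorem finite_bounded {S : Set (FreeGroup α)} (hS : S.Finite) (n : ℕ) :
    {g : FreeGroup α | g ∈ Subgroup.closure S ∧ (toWord g).length ≤ n}.Finite := by
  classical
  set A : Set (α × Bool) := ⋃ s ∈ S, {p : α × Bool | ∃ b, (p.1, b) ∈ toWord s} with hA
  have hAfin : A.Finite := by
    refine hS.biUnion fun s _ => ?_
    have : {p : α × Bool | ∃ b, (p.1, b) ∈ toWord s}
        ⊆ (fun q : (α × Bool) × Bool => (q.1.1, q.2)) '' ((toWord s).toFinset ×ˢ
            (Finset.univ : Finset Bool) : Finset ((α × Bool) × Bool)) := by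
      rintro ⟨a, b⟩ ⟨b', hb'⟩
      exact ⟨((a, b'), b), by simp [hb'], rfl⟩
    exact Set.Finite.subset (Set.toFinite _) this
  haveI : Finite ↥A := hAfin.to_subtype
  have hsub : {g : FreeGroup α | g ∈ Subgroup.closure S ∧ (toWord g).length ≤ n}
      ⊆ (fun l : List ↥A => FreeGroup.mk (l.map Subtype.val)) ''
        {l : List ↥A | l.length ≤ n} := by
    intro g ⟨hg, hlen⟩
    have hlet : ∀ p ∈ toWord g, p ∈ A := by
      intro p hp
      obtain ⟨s, hs, b, hb⟩ := letter_mem S hg p hp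
      exact Set.mem_biUnion hs ⟨b, hb⟩
    refine ⟨(toWord g).attach.map fun q => (⟨q.1, hlet q.1 q.2⟩ : ↥A), by simpa using hlen, ?_⟩
    simp only [List.map_map]
    have : ((toWord g).attach.map fun q => q.1) = toWord g := List.attach_map_subtype_val _
    simpa [Function.comp_def, this] using FreeGroup.mk_toWord
  exact Set.Finite.subset ((List.finite_length_le _ n).image _) hsub

theorem toWord_mk_length_le (L : List (α × Bool)) :
    (FreeGroup.mk L).toWord.length ≤ L.length := by
  rw [FreeGroup.toWord_mk]
  exact (FreeGroup.Red.sublist reduce.red).length_le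

/-- Howson's theorem for free groups. -/
theorem inf_fg (G H : Subgroup (FreeGroup α)) (hG : G.FG) (hH : H.FG) : (G ⊓ H).FG := by
  classical
  obtain ⟨SG, hSG, hSGfin⟩ := (Subgroup.fg_iff G).1 hG
  obtain ⟨SH, hSH, hSHfin⟩ := (Subgroup.fg_iff H).1 hH
  set CG : Set (FreeGroup α) :=
    {c | c = 1 ∨ ∃ s ∈ SG, ∃ m, c = FreeGroup.mk ((toWord s).take m)} with hCG
  set CH : Set (FreeGroup α) :=
    {c | c = 1 ∨ ∃ s ∈ SH, ∃ m, c = FreeGroup.mk ((toWord s).take m)} with hCH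
  have hCGfin : CG.Finite := classSet_finite hSGfin
  have hCHfin : CH.Finite := classSet_finite hSHfin
  have hDfin : (CG ×ˢ CH).Finite := hCGfin.prod hCHfin
  set N : ℕ := hDfin.toFinset.card with hN
  set E : Set (FreeGroup α) := {g | g ∈ G ⊓ H ∧ (toWord g).length ≤ 2 * N} with hE
  have hEfin : E.Finite := by
    refine (finite_bounded hSGfin (2 * N)).subset ?_
    rintro g ⟨hg, hlen⟩
    exact ⟨hSG ▸ hg.1, hlen⟩
  have hEsub : E ⊆ (G ⊓ H : Subgroup (FreeGroup α)) := fun g hg => hg.1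
  -- main claim: every element of G ⊓ H lies in the closure of E
  have main : ∀ n : ℕ, ∀ k : FreeGroup α, k ∈ G ⊓ H → (toWord k).length = n →
      k ∈ Subgroup.closure E := by
    intro n
    induction n using Nat.strong_induction_on with
    | _ n ih =>
      intro k hk hklen
      by_cases hsmall : (toWord k).length ≤ 2 * N
      · exact Subgroup.subset_closure ⟨hk, hsmall⟩
      push_neg at hsmall
      set w := toWord k with hw
      have hkG : k ∈ Subgroup.closure SG := by rw [hSG]; exact hk.1
      have hkH : k ∈ Subgroup.closure SH := by rw [hSH]; exact hk.2
      have hGp := fun i : ℕ => prefix_class SG hkG i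
      choose cG hcG1 hcG2 using hGp
      have hHp := fun i : ℕ => prefix_class SH hkH i
      choose cH hcH1 hcH2 using hHp
      have hmaps : ∀ i ∈ Finset.range (N + 1),
          (cG i, cH i) ∈ hDfin.toFinset := by
        intro i _
        rw [Set.Finite.mem_toFinset]
        exact Set.mk_mem_prod (hcG1 i) (hcH1 i)
      obtain ⟨i, hi, j, hj, hij, heq⟩ :=
        Finset.exists_ne_map_eq_of_card_lt_of_maps_to
          (by rw [Finset.card_range]; omega) hmaps
      rw [Finset.mem_range] at hi hj
      -- wlog i < j
      wlog hlt : i < j generalizing i j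
      · exact this j hj i hi hij.symm heq.symm (by omega)
      have heqG : cG i = cG j := congrArg Prod.fst heq
      have heqH : cH i = cH j := congrArg Prod.snd heq
      set a : FreeGroup α := FreeGroup.mk (w.take j) * (FreeGroup.mk (w.take i))⁻¹ with ha
      have haG : a ∈ G := by
        have h1 := hcG2 j
        have h2 := hcG2 i
        rw [hSG] at *
        have : a = (FreeGroup.mk (w.take j) * (cG j)⁻¹)
            * (FreeGroup.mk (w.take i) * (cG i)⁻¹)⁻¹ := by
          rw [ha, heqG]; group
        rw [this]
        exact mul_mem h1 (inv_mem h2)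
      have haH : a ∈ H := by
        have h1 := hcH2 j
        have h2 := hcH2 i
        rw [hSH] at *
        have : a = (FreeGroup.mk (w.take j) * (cH j)⁻¹)
            * (FreeGroup.mk (w.take i) * (cH i)⁻¹)⁻¹ := by
          rw [ha, heqH]; group
        rw [this]
        exact mul_mem h1 (inv_mem h2)
      have halen : (toWord a).length ≤ 2 * N := by
        have : a = FreeGroup.mk (w.take j ++ invRev (w.take i)) := by
          rw [ha, ← FreeGroup.mul_mk, FreeGroup.inv_mk]
        rw [this]
        refine (toWord_mk_length_le _).trans ?_
        have h1 : (w.take j).length ≤ j := by simp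
        have h2 : (invRev (w.take i)).length ≤ i := by rw [invRev_length]; simp
        rw [List.length_append]
        omega
      have haE : a ∈ E := ⟨⟨haG, haH⟩, halen⟩
      set b : FreeGroup α := FreeGroup.mk (w.take i ++ w.drop j) with hb
      have hab : a * b = k := by
        rw [ha, hb, ← FreeGroup.mul_mk]
        have : FreeGroup.mk (w.take j) * FreeGroup.mk (w.drop j) = k := by
          rw [mk_take_mul_mk_drop, hw, FreeGroup.mk_toWord]
        rw [← this]
        group
      have hbmem : b ∈ G ⊓ H := by
        have : b = a⁻¹ * k := by rw [← hab]; group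
        rw [this]
        exact mul_mem (inv_mem ⟨haG, haH⟩) hk
      have hblen : (toWord b).length < n := by
        have h1 : (toWord b).length ≤ (w.take i ++ w.drop j).length :=
          toWord_mk_length_le _
        rw [List.length_append, List.length_take, List.length_drop] at h1
        have h2 : w.length = n := hklen
        omega
      have hbcl : b ∈ Subgroup.closure E := ih _ hblen b hbmem rfl
      rw [← hab]
      exact mul_mem (Subgroup.subset_closure haE) hbcl
  refine (Subgroup.fg_iff _).2 ⟨E, ?_, hEfin⟩
  refine le_antisymm ((Subgroup.closure_le _).2 hEsub) ?_
  intro k hk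
  exact main _ k hk rfl

theorem finite_of_freeGroup_fg {β : Type*} [DecidableEq β] (h : Group.FG (FreeGroup β)) :
    Finite β := by
  obtain ⟨S, hScl, hSfin⟩ := Group.fg_iff.1 h
  have huniv : (Set.univ : Set β).Finite := by
    have hsub : (Set.univ : Set β) ⊆ ⋃ s ∈ S, {a : β | ∃ b, (a, b) ∈ toWord s} := by
      intro a _
      have hmem : FreeGroup.of a ∈ Subgroup.closure S := hScl ▸ Subgroup.mem_top _
      obtain ⟨s, hs, b, hb⟩ := letter_mem S hmem (a, true) (by simp [FreeGroup.toWord_of])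
      exact Set.mem_biUnion hs ⟨b, hb⟩
    refine (hSfin.biUnion fun s _ => ?_).subset hsub
    refine Set.Finite.subset (((toWord s).toFinset : Set (β × Bool)).toFinite.image Prod.fst) ?_
    rintro a ⟨b, hb⟩
    exact ⟨(a, b), by simp [hb], rfl⟩
  exact Set.finite_univ_iff.1 huniv

end HowsonAux

theorem howson_for_free_group_rings
    {α : Type*} (G H : Subgroup (FreeGroup α)) (hG : G.FG) (hH : H.FG) :
    (∀ x : MonoidAlgebra ℤ (FreeGroup α),
        ((x.coeff.support : Set (FreeGroup α)) ⊆ G ∧ (x.coeff.support : Set (FreeGroup α)) ⊆ H) ↔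
          (x.coeff.support : Set (FreeGroup α)) ⊆ (G ⊓ H : Subgroup (FreeGroup α))) ∧
      (G ⊓ H).FG ∧
      ∃ (β : Type) (_ : Finite β), Nonempty (↥(G ⊓ H) ≃* FreeGroup β) := by
  classical
  have hfg : (G ⊓ H).FG := HowsonAux.inf_fg G H hG hH
  refine ⟨?_, hfg, ?_⟩
  · intro x
    rw [Subgroup.coe_inf, Set.subset_inter_iff]
  · haveI : Group.FG ↥(G ⊓ H) := (Group.fg_iff_subgroup_fg _).2 hfg
    haveI : IsFreeGroup ↥(G ⊓ H) := inferInstance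
    haveI : Group.FG (FreeGroup (IsFreeGroup.Generators ↥(G ⊓ H))) :=
      Group.fg_of_surjective (f := (IsFreeGroup.toFreeGroup ↥(G ⊓ H)).toMonoidHom)
        (IsFreeGroup.toFreeGroup ↥(G ⊓ H)).surjective
    haveI : Finite (IsFreeGroup.Generators ↥(G ⊓ H)) := HowsonAux.finite_of_freeGroup_fg this
    obtain ⟨n, ⟨e⟩⟩ := Finite.exists_equiv_fin (IsFreeGroup.Generators ↥(G ⊓ H))
    exact ⟨Fin n, inferInstance,
      ⟨(IsFreeGroup.toFreeGroup ↥(G ⊓ H)).trans (FreeGroup.freeGroupCongr e)⟩⟩
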